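/- With Q symmetric PSD with ker(Q) = span(1), Ω := 1ζᵀ + ζ1ᵀ − 2Q† (ζ = diagvec(Q†)), the resistance curvature and radius satisfy p = Ω^{−1}1 / (1ᵀΩ^{−1}1) and σ² = (1/2)(1ᵀΩ^{−1}1)^{−1}, and moreover σ² = (1/2)pᵀΩp and σ² > 0. -/

import Mathlib

open Matrix Classical

/-- The Moore–Penrose pseudoinverse of a real matrix, defined via its four
characterizing Penrose equations (which have a unique solution). -/
noncomputable def pinv {m k : Type*} [Fintype m] [Fintype k]
    (A : Matrix m k ℝ) : Matrix k m ℝ :=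
  if h : ∃ X : Matrix k m ℝ,
      A * X * A = A ∧ X * A * X = X ∧ (A * X)ᵀ = A * X ∧ (X * A)ᵀ = X * A
  then h.choose else 0

lemma penrose_unique {m k : Type*} [Fintype m] [Fintype k] (A : Matrix m k ℝ)
    (X Y : Matrix k m ℝ)
    (hX1 : A*X*A = A) (hX2 : X*A*X = X) (hX3 : (A*X)ᵀ = A*X) (hX4 : (X*A)ᵀ = X*A)
    (hY1 : A*Y*A = A) (hY2 : Y*A*Y = Y) (hY3 : (A*Y)ᵀ = A*Y) (hY4 : (Y*A)ᵀ = Y*A) :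
    X = Y := by
  have a : (Y*A)*(X*A) = Y*A := by
    rw [Matrix.mul_assoc Y A (X*A), ← Matrix.mul_assoc A X A, hX1]
  have a' : (X*A)*(Y*A) = Y*A := by
    have := congrArg Matrix.transpose a
    rwa [transpose_mul, hX4, hY4] at this
  have b : (X*A)*(Y*A) = X*A := by
    rw [Matrix.mul_assoc X A (Y*A), ← Matrix.mul_assoc A Y A, hY1]
  have hXYA : X*A = Y*A := by rw [← b, a']
  have c1 : (A*X)*(A*Y) = A*Y := by
    rw [← Matrix.mul_assoc (A*X) A Y, hX1]
  have c2 : (A*Y)*(A*X) = A*X := by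
    rw [← Matrix.mul_assoc (A*Y) A X, hY1]
  have c1' : (A*Y)*(A*X) = A*Y := by
    have := congrArg Matrix.transpose c1
    rwa [transpose_mul, hX3, hY3] at this
  have hAXY : A*X = A*Y := by rw [← c2, c1']
  calc X = X*A*X := hX2.symm
    _ = X*(A*X) := Matrix.mul_assoc X A X
    _ = X*(A*Y) := by rw [hAXY]
    _ = (X*A)*Y := (Matrix.mul_assoc X A Y).symm
    _ = (Y*A)*Y := by rw [hXYA]
    _ = Y := hY2

theorem resistance_curvature_radius_via_inverse
    {n : ℕ} (hn : 2 ≤ n) (Q : Matrix (Fin n) (Fin n) ℝ)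
    (hQ : Q.PosSemidef)
    (hker : ∀ v : Fin n → ℝ, Q.mulVec v = 0 ↔ ∃ c : ℝ, v = fun _ => c)
    (ζ : Fin n → ℝ) (hζ : ζ = fun i => pinv Q i i)
    (Ω : Matrix (Fin n) (Fin n) ℝ)
    (hΩ : Ω = Matrix.of (fun _ j => ζ j) + Matrix.of (fun i _ => ζ i) - 2 • pinv Q)
    (p : Fin n → ℝ)
    (hp : p = (1 / 2 : ℝ) • Q.mulVec ζ + (1 / (n : ℝ)) • ((fun _ => 1) : Fin n → ℝ))
    (σ2 : ℝ) (hσ2 : σ2 = (1 / 4) * (ζ ⬝ᵥ Q.mulVec ζ) + (1 / (n : ℝ)) * ∑ i, ζ i) :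
    p = (((fun _ => 1) : Fin n → ℝ) ⬝ᵥ Ω⁻¹.mulVec (fun _ => 1))⁻¹ •
        Ω⁻¹.mulVec (fun _ => 1) ∧
    σ2 = (1 / 2) * (((fun _ => 1) : Fin n → ℝ) ⬝ᵥ Ω⁻¹.mulVec (fun _ => 1))⁻¹ ∧
    σ2 = (1 / 2) * (p ⬝ᵥ Ω.mulVec p) ∧
    0 < σ2 := by
  have hnR : (0:ℝ) < (n:ℝ) := by
    have : 0 < n := lt_of_lt_of_le (by norm_num) hn
    exact_mod_cast this
  set c : ℝ := (n:ℝ)⁻¹ with hc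
  have hcn : c * n = 1 := inv_mul_cancel₀ hnR.ne'
  set u : Fin n → ℝ := fun _ => 1 with hu
  set J : Matrix (Fin n) (Fin n) ℝ := Matrix.of fun _ _ => (1:ℝ) with hJ
  have hQsym : Qᵀ = Q := by
    rw [← conjTranspose_eq_transpose_of_trivial]; exact hQ.1
  have hQu : Q *ᵥ u = 0 := (hker u).mpr ⟨1, rfl⟩
  have hrow : ∀ i, ∑ k, Q i k = 0 := by
    intro i
    have := congrFun hQu i
    simpa [Matrix.mulVec, dotProduct, hu] using this
  have hQJ : Q * J = 0 := by
    ext i j; simp [Matrix.mul_apply, hJ, hrow i]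
  have hJQ : J * Q = 0 := by
    ext i j
    have : ∀ k, Q k j = Q j k := fun k => by conv_lhs => rw [← hQsym, Matrix.transpose_apply]
    simp only [Matrix.mul_apply, hJ, Matrix.of_apply, one_mul, Matrix.zero_apply]
    simp_rw [this]; exact hrow j
  have hJJ : J * J = (n:ℝ) • J := by
    ext i j; simp [Matrix.mul_apply, hJ, Finset.card_univ]
  set M : Matrix (Fin n) (Fin n) ℝ := Q + c • J with hM
  have hJu : J *ᵥ u = (n:ℝ) • u := by
    ext i; simp [Matrix.mulVec, dotProduct, hJ, hu, Finset.card_univ]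
  have hMu : M *ᵥ u = u := by
    rw [hM, Matrix.add_mulVec, hQu, Matrix.smul_mulVec, hJu, smul_smul, hcn]
    simp

  have hJsym : Jᵀ = J := by ext i j; simp [hJ]
  have hMsym : Mᵀ = M := by
    rw [hM, Matrix.transpose_add, hQsym, Matrix.transpose_smul, hJsym]
  have hMpd : M.PosDef := by
    refine posDef_iff_dotProduct_mulVec.mpr ⟨?_, ?_⟩
    · show Mᴴ = M
      rw [conjTranspose_eq_transpose_of_trivial]; exact hMsym
    · intro x hx
      have hqx : (0:ℝ) ≤ x ⬝ᵥ Q *ᵥ x := by simpa using hQ.dotProduct_mulVec_nonneg x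
      have hJx : x ⬝ᵥ (J *ᵥ x) = (∑ i, x i) ^ 2 := by
        simp [Matrix.mulVec, dotProduct, hJ, ← Finset.sum_mul, sq, mul_comm]
      have expand : (star x) ⬝ᵥ (M *ᵥ x) = x ⬝ᵥ Q *ᵥ x + c * (∑ i, x i)^2 := by
        rw [hM, Matrix.add_mulVec, Matrix.smul_mulVec]
        simp [dotProduct_add, dotProduct_smul, hJx]
      rw [expand]
      rcases eq_or_ne (∑ i, x i) 0 with hs | hs
      · have hq0 : x ⬝ᵥ Q *ᵥ x ≠ 0 := by
          intro h0
          have := (hQ.dotProduct_mulVec_zero_iff x).mp (by simpa using h0)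
          obtain ⟨d, hd⟩ := (hker x).mp this
          rw [hd] at hs
          simp [Finset.sum_const, Finset.card_univ] at hs
          rcases hs with hs | hs
          · exact absurd hs (by positivity)
          · exact hx (by rw [hd, hs]; rfl)
        have : 0 < x ⬝ᵥ Q *ᵥ x := lt_of_le_of_ne hqx (Ne.symm hq0)
        rw [hs]; simpa using this
      · have : 0 < c * (∑ i, x i)^2 := by positivity
        linarith
  have hdet : IsUnit M.det := hMpd.det_pos.ne'.isUnit

  have hMMi : M * M⁻¹ = 1 := Matrix.mul_nonsing_inv M hdet
  have hMiM : M⁻¹ * M = 1 := Matrix.nonsing_inv_mul M hdet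
  have hMJ : M * J = J := by
    rw [hM, Matrix.add_mul, hQJ, Matrix.smul_mul, hJJ, smul_smul, hcn, zero_add, one_smul]
  have hJM : J * M = J := by
    rw [hM, Matrix.mul_add, hJQ, Matrix.mul_smul, hJJ, smul_smul, hcn, zero_add, one_smul]
  have hMiJ : M⁻¹ * J = J := by
    calc M⁻¹ * J = M⁻¹ * (M * J) := by rw [hMJ]
    _ = (M⁻¹ * M) * J := (Matrix.mul_assoc _ _ _).symm
    _ = J := by rw [hMiM, Matrix.one_mul]
  have hJMi : J * M⁻¹ = J := by
    calc J * M⁻¹ = (J * M) * M⁻¹ := by rw [hJM]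
    _ = J * (M * M⁻¹) := Matrix.mul_assoc _ _ _
    _ = J := by rw [hMMi, Matrix.mul_one]
  set X : Matrix (Fin n) (Fin n) ℝ := M⁻¹ - c • J with hX
  have hQM : Q = M - c • J := by rw [hM]; abel
  have hQX : Q * X = 1 - c • J := by
    rw [hQM, hX, Matrix.sub_mul, Matrix.mul_sub, Matrix.mul_sub, hMMi, Matrix.mul_smul, hMJ,
      Matrix.smul_mul, Matrix.smul_mul, hJMi, Matrix.mul_smul, hJJ, smul_smul, smul_smul]
    rw [show c * c * (n:ℝ) = c by rw [mul_assoc, hcn, mul_one]]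
    abel
  have hXQ : X * Q = 1 - c • J := by
    rw [hQM, hX, Matrix.sub_mul, Matrix.mul_sub, Matrix.mul_sub, hMiM, Matrix.mul_smul, hMiJ,
      Matrix.smul_mul, Matrix.smul_mul, hJM, Matrix.mul_smul, hJJ, smul_smul, smul_smul]
    rw [show c * c * (n:ℝ) = c by rw [mul_assoc, hcn, mul_one]]
    abel
  have hXJ : X * J = 0 := by
    rw [hX, Matrix.sub_mul, hMiJ, Matrix.smul_mul, hJJ, smul_smul, hcn, one_smul, sub_self]
  have hJX : J * X = 0 := by
    rw [hX, Matrix.mul_sub, hJMi, Matrix.mul_smul, hJJ, smul_smul, hcn, one_smul, sub_self]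
  have hJQ' : (c • J) * Q = 0 := by rw [Matrix.smul_mul, hJQ, smul_zero]
  have pen1 : Q * X * Q = Q := by
    rw [hQX, Matrix.sub_mul, Matrix.one_mul, hJQ', sub_zero]
  have pen2 : X * Q * X = X := by
    rw [hXQ, Matrix.sub_mul, Matrix.one_mul, Matrix.smul_mul, hJX, smul_zero, sub_zero]
  have pen3 : (Q * X)ᵀ = Q * X := by
    rw [hQX, Matrix.transpose_sub, Matrix.transpose_one, Matrix.transpose_smul, hJsym]
  have pen4 : (X * Q)ᵀ = X * Q := by
    rw [hXQ, Matrix.transpose_sub, Matrix.transpose_one, Matrix.transpose_smul, hJsym]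

  have hex : ∃ Z : Matrix (Fin n) (Fin n) ℝ,
      Q * Z * Q = Q ∧ Z * Q * Z = Z ∧ (Q * Z)ᵀ = Q * Z ∧ (Z * Q)ᵀ = Z * Q :=
    ⟨X, pen1, pen2, pen3, pen4⟩
  have hpinv : pinv Q = X := by
    rw [pinv, dif_pos hex]
    obtain ⟨h1, h2, h3, h4⟩ := hex.choose_spec
    exact penrose_unique Q _ X h1 h2 h3 h4 pen1 pen2 pen3 pen4
  have hXsym : Xᵀ = X := by
    rw [hX, Matrix.transpose_sub, Matrix.transpose_nonsing_inv, hMsym, Matrix.transpose_smul, hJsym]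
  have hXpsd : X.PosSemidef := by
    have h := hQ.mul_mul_conjTranspose_same X
    have hXh : Xᴴ = X := by rw [conjTranspose_eq_transpose_of_trivial, hXsym]
    rw [hXh] at h
    rwa [Matrix.mul_assoc, ← Matrix.mul_assoc, pen2] at h
  have hdiag : ∀ i, 0 ≤ X i i := by
    intro i
    have := hXpsd.dotProduct_mulVec_nonneg (Pi.single i 1)
    simpa [Matrix.mulVec, dotProduct, Pi.single_apply] using this
  have hXne : X ≠ 0 := by
    intro h0
    rw [h0, Matrix.zero_mul] at hXQ
    have i0 : Fin n := ⟨0, by omega⟩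
    have := congrFun (congrFun hXQ i0) i0
    simp [hJ, Matrix.one_apply] at this
    rw [hc] at this
    have : (n:ℝ) = 1 := by field_simp at this; linarith [this]
    have : n = 1 := by exact_mod_cast this
    omega
  have htr : 0 < ∑ i, X i i := by
    have hnn : (0:ℝ) ≤ ∑ i, X i i := Finset.sum_nonneg (fun i _ => hdiag i)
    rcases hnn.lt_or_eq with h | h
    · exact h
    · exfalso
      apply hXne
      have hdz : ∀ i, X i i = 0 := fun i =>
        (Finset.sum_eq_zero_iff_of_nonneg (fun i _ => hdiag i)).mp h.symm i (Finset.mem_univ i)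
      ext i j
      have hcol : X *ᵥ Pi.single j 1 = 0 := by
        apply (hXpsd.dotProduct_mulVec_zero_iff (Pi.single j 1)).mp
        simp [Matrix.mulVec, dotProduct, Pi.single_apply, hdz j]
      have := congrFun hcol i
      simpa [Matrix.mulVec, dotProduct, Pi.single_apply] using this

  -- vecMulVec toolkit
  have mulvmv : ∀ (A : Matrix (Fin n) (Fin n) ℝ) (a b : Fin n → ℝ),
      A * vecMulVec a b = vecMulVec (A *ᵥ a) b := by
    intro A a b; ext i j
    simp only [Matrix.mul_apply, vecMulVec_apply, Matrix.mulVec, dotProduct]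
    rw [Finset.sum_mul]
    exact Finset.sum_congr rfl fun k _ => (mul_assoc _ _ _).symm
  have vmvmul : ∀ (a b : Fin n → ℝ) (A : Matrix (Fin n) (Fin n) ℝ),
      vecMulVec a b * A = vecMulVec a (b ᵥ* A) := by
    intro a b A; ext i j
    simp only [Matrix.mul_apply, vecMulVec_apply, Matrix.vecMul, dotProduct]
    rw [Finset.mul_sum]
    exact Finset.sum_congr rfl fun k _ => mul_assoc _ _ _
  have vmvmulVec : ∀ (a b x : Fin n → ℝ),
      vecMulVec a b *ᵥ x = (b ⬝ᵥ x) • a := by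
    intro a b x; ext i
    simp only [Matrix.mulVec, vecMulVec_apply, dotProduct, Pi.smul_apply, smul_eq_mul]
    simp only [Finset.sum_mul]
    exact Finset.sum_congr rfl fun k _ => by ring
  have vmv_smul : ∀ (a b : Fin n → ℝ) (r : ℝ),
      vecMulVec a (r • b) = r • vecMulVec a b := by
    intro a b r; ext i j; simp [vecMulVec_apply]; ring
  have vmv_smul' : ∀ (a b : Fin n → ℝ) (r : ℝ),
      vecMulVec (r • a) b = r • vecMulVec a b := by
    intro a b r; ext i j; simp [vecMulVec_apply]; ring
  have vmv_add : ∀ (a b b' : Fin n → ℝ),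
      vecMulVec a (b + b') = vecMulVec a b + vecMulVec a b' := by
    intro a b b'; ext i j; simp [vecMulVec_apply]; ring
  have vmv_uu : vecMulVec u u = J := by
    ext i j; simp [vecMulVec_apply, hu, hJ]
  -- rewrite the data
  have hζ' : ζ = fun i => X i i := by rw [hζ, hpinv]
  have hΩ' : Ω = vecMulVec u ζ + vecMulVec ζ u - (2:ℝ) • X := by
    rw [hΩ, hpinv]
    congr 1
    · congr 1
      · ext i j; simp [vecMulVec_apply, hu]
      · ext i j; simp [vecMulVec_apply, hu]
    · ext i j; simp
  have hc' : (1 / (n:ℝ)) = c := by rw [hc, one_div]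
  have hp' : p = (1/2 : ℝ) • (Q *ᵥ ζ) + c • u := by rw [hp, hc']
  -- positivity of σ2
  have hζQζ : (0:ℝ) ≤ ζ ⬝ᵥ Q *ᵥ ζ := by simpa using hQ.dotProduct_mulVec_nonneg ζ
  have htrζ : 0 < ∑ i, ζ i := by rw [hζ']; exact htr
  have hσpos : 0 < σ2 := by
    rw [hσ2, hc']
    have h1 : 0 < c * ∑ i, ζ i := mul_pos (by rw [hc]; positivity) htrζ
    nlinarith
  set s : ℝ := 2 * σ2 with hs
  have hsne : s ≠ 0 := by positivity
  -- vector identities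
  have hMiu : M⁻¹ *ᵥ u = u := by
    calc M⁻¹ *ᵥ u = M⁻¹ *ᵥ (M *ᵥ u) := by rw [hMu]
    _ = (M⁻¹ * M) *ᵥ u := (Matrix.mulVec_mulVec _ _ _)
    _ = u := by rw [hMiM, Matrix.one_mulVec]
  have hXu : X *ᵥ u = 0 := by
    rw [hX, Matrix.sub_mulVec, hMiu, Matrix.smul_mulVec, hJu, smul_smul, hcn, one_smul,
      sub_self]
  have huQ : u ᵥ* Q = 0 := by
    rw [← Matrix.mulVec_transpose, hQsym, hQu]
  have hζQ : ζ ᵥ* Q = Q *ᵥ ζ := by rw [← Matrix.mulVec_transpose, hQsym]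
  have huu : u ⬝ᵥ u = (n:ℝ) := by simp [dotProduct, hu, Finset.card_univ]
  have hup : u ⬝ᵥ p = 1 := by
    rw [hp']
    rw [dotProduct_add, dotProduct_smul, dotProduct_smul, dotProduct_mulVec, huQ,
      zero_dotProduct, huu, smul_zero, smul_eq_mul, hcn]
    simp
  have hJζ : J *ᵥ ζ = (∑ i, ζ i) • u := by
    ext i; simp [Matrix.mulVec, dotProduct, hJ, hu]
  have hXQζ : X *ᵥ (Q *ᵥ ζ) = ζ - (c * ∑ i, ζ i) • u := by
    rw [Matrix.mulVec_mulVec, hXQ, Matrix.sub_mulVec, Matrix.one_mulVec,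
      Matrix.smul_mulVec, hJζ, smul_smul]
  have hXp : X *ᵥ p = (1/2 : ℝ) • ζ - ((1/2) * (c * ∑ i, ζ i)) • u := by
    rw [hp', Matrix.mulVec_add, Matrix.mulVec_smul, Matrix.mulVec_smul, hXu, hXQζ, smul_zero,
      add_zero, smul_sub, smul_smul]
  have hζp : ζ ⬝ᵥ p = (1/2) * (ζ ⬝ᵥ Q *ᵥ ζ) + c * ∑ i, ζ i := by
    rw [hp', dotProduct_add, dotProduct_smul, dotProduct_smul, smul_eq_mul, smul_eq_mul]
    congr 1
    simp [dotProduct, hu, mul_comm]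
  have hΩp : Ω *ᵥ p = s • u := by
    rw [hΩ', Matrix.sub_mulVec, Matrix.add_mulVec, vmvmulVec, vmvmulVec,
      Matrix.smul_mulVec, hXp, hup, hζp]
    have : s = ((1/2) * (ζ ⬝ᵥ Q *ᵥ ζ) + c * ∑ i, ζ i) + (c * ∑ i, ζ i) := by
      rw [hs, hσ2, hc']; ring
    rw [this]
    module
  -- the explicit inverse
  set B : Matrix (Fin n) (Fin n) ℝ := (-(1/2) : ℝ) • Q + s⁻¹ • vecMulVec p p with hB
  have hΩQ : Ω * Q = vecMulVec u (Q *ᵥ ζ) - (2:ℝ) • (1 - c • J) := by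
    rw [hΩ', Matrix.sub_mul, Matrix.add_mul, vmvmul, vmvmul, huQ, hζQ, Matrix.smul_mul, hXQ]
    have : vecMulVec ζ (0 : Fin n → ℝ) = 0 := by ext i j; simp [vecMulVec_apply]
    rw [this, add_zero]
  have hΩvp : Ω * vecMulVec p p = s • vecMulVec u p := by
    rw [mulvmv, hΩp, vmv_smul']
  have hvup : vecMulVec u p = (1/2 : ℝ) • vecMulVec u (Q *ᵥ ζ) + c • J := by
    rw [hp', vmv_add, vmv_smul, vmv_smul, vmv_uu]
  have hΩB : Ω * B = 1 := by
    rw [hB, Matrix.mul_add, Matrix.mul_smul, Matrix.mul_smul, hΩQ, hΩvp, smul_smul,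
      inv_mul_cancel₀ hsne, one_smul, hvup]
    module
  have hΩinv : Ω⁻¹ = B := Matrix.inv_eq_right_inv hΩB
  have hpu : p ⬝ᵥ u = 1 := by rw [dotProduct_comm]; exact hup
  have hBu : Ω⁻¹ *ᵥ u = s⁻¹ • p := by
    rw [hΩinv, hB, Matrix.add_mulVec, Matrix.smul_mulVec, Matrix.smul_mulVec,
      hQu, vmvmulVec, hpu, one_smul, smul_zero, zero_add]
  have hd : u ⬝ᵥ (Ω⁻¹ *ᵥ u) = s⁻¹ := by
    rw [hBu, dotProduct_smul, smul_eq_mul, hup, mul_one]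
  refine ⟨?_, ?_, ?_, hσpos⟩
  · rw [hd, hBu, inv_inv, smul_smul, mul_inv_cancel₀ hsne, one_smul]
  · rw [hd, inv_inv, hs]; ring
  · rw [hΩp, dotProduct_smul, smul_eq_mul, hpu, mul_one, hs]; ring
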